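/- Let s ≥ 1 and n ≥ 0 be integers, let (A_{k,p}) be a finitely supported family of complex numbers indexed by pairs (k,p) with k a nonzero multi-index and p = (p₀,…,pₙ) an (n+1)-tuple of nonnegative integers, and let 0 < ν̃ ≤ 1. Then there is a unique family (C_m) of real numbers indexed by nonzero multi-indices satisfying the majorant recursion (R2); every C_m is nonnegative; and there exists R > 0 such that C_m ≤ R^{|m|} for every nonzero multi-index m. -/

import Mathlib

/-- Sum of `∏ t, C(f t)` over all ordered `p`-tuples `f` of nonzero multi-indices
with `f 0 + ⋯ + f (p-1) = l` (the quantity `S(l,p)` of the majorant recursion).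
For `p = 0` it equals `1` if `l = 0` and `0` otherwise. -/
noncomputable def tupleSumR (s : ℕ) (C : (Fin s → ℕ) → ℝ) (p : ℕ) (l : Fin s → ℕ) : ℝ :=
  ∑ᶠ f ∈ {f : Fin p → Fin s → ℕ | (∀ t, f t ≠ 0) ∧ (∑ t, f t) = l}, ∏ t, C (f t)

/-- The majorant recursion (R2):
`ν̃·C_m = Σ_{0<k≤m} Σ_p |A_{k,p}| Σ_{l⁽⁰⁾+⋯+l⁽ⁿ⁾=m−k} ∏_j S(l⁽ʲ⁾, p_j)`. -/
def MajorantRec (s n : ℕ) (ν' : ℝ) (A : (Fin s → ℕ) → (Fin (n + 1) → ℕ) → ℂ)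
    (C : (Fin s → ℕ) → ℝ) : Prop :=
  ∀ m : Fin s → ℕ, m ≠ 0 →
    ν' * C m =
      ∑ᶠ k ∈ {k : Fin s → ℕ | k ≠ 0 ∧ k ≤ m},
        ∑ᶠ p : Fin (n + 1) → ℕ,
          ‖A k p‖ *
            ∑ᶠ ls ∈ {ls : Fin (n + 1) → Fin s → ℕ | (∑ j, ls j) = m - k},
              ∏ j, tupleSumR s C (p j) (ls j)


open Finset

namespace Stmt12Aux

variable {s n : ℕ}

/-- The "box" of multi-indices `≤ l`. -/
def box {s : ℕ} (l : Fin s → ℕ) : Finset (Fin s → ℕ) :=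
  Fintype.piFinset fun i => Finset.Iic (l i)

lemma mem_box {l a : Fin s → ℕ} : a ∈ box l ↔ a ≤ l := by
  simp [box, Fintype.mem_piFinset, Pi.le_def]

/-- Tuples of `p` multi-indices summing to `l`. -/
def tset (s p : ℕ) (l : Fin s → ℕ) : Finset (Fin p → Fin s → ℕ) :=
  (Fintype.piFinset fun _ => box l).filter fun f => (∑ t, f t) = l

lemma le_of_sum_eq {p : ℕ} {l : Fin s → ℕ} {f : Fin p → Fin s → ℕ}
    (h : (∑ t, f t) = l) (t : Fin p) : f t ≤ l := by
  subst h
  intro i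
  rw [Finset.sum_apply]
  exact Finset.single_le_sum (f := fun t => f t i) (fun t _ => Nat.zero_le _) (Finset.mem_univ t)

lemma mem_tset {p : ℕ} {l : Fin s → ℕ} {f : Fin p → Fin s → ℕ} :
    f ∈ tset s p l ↔ (∑ t, f t) = l := by
  constructor
  · intro h; exact (Finset.mem_filter.1 h).2
  · intro h
    refine Finset.mem_filter.2 ⟨?_, h⟩
    rw [Fintype.mem_piFinset]
    intro t; rw [mem_box]; exact le_of_sum_eq h t

/-- Finset version of `tupleSumR`. -/
noncomputable def Sfin (s : ℕ) (C : (Fin s → ℕ) → ℝ) (p : ℕ) (l : Fin s → ℕ) : ℝ :=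
  ∑ f ∈ (tset s p l).filter (fun f => ∀ t, f t ≠ 0), ∏ t, C (f t)

lemma tupleSumR_eq (C : (Fin s → ℕ) → ℝ) (p : ℕ) (l : Fin s → ℕ) :
    tupleSumR s C p l = Sfin s C p l := by
  rw [tupleSumR, Sfin, ← finsum_mem_coe_finset]
  congr 1
  ext f
  simp only [Finset.coe_filter, Set.mem_setOf_eq, mem_tset, Set.mem_sep_iff, and_comm]

noncomputable def kset (m : Fin s → ℕ) : Finset (Fin s → ℕ) :=
  (box m).filter (· ≠ 0)

lemma mem_kset {m k : Fin s → ℕ} : k ∈ kset m ↔ k ≠ 0 ∧ k ≤ m := by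
  simp [kset, mem_box]; tauto

/-- Finset version of the RHS of the majorant recursion. -/
noncomputable def RHSfin (s n : ℕ) (A : (Fin s → ℕ) → (Fin (n + 1) → ℕ) → ℂ)
    (P : Finset (Fin (n + 1) → ℕ)) (C : (Fin s → ℕ) → ℝ) (m : Fin s → ℕ) : ℝ :=
  ∑ k ∈ kset m, ∑ p ∈ P,
    ‖A k p‖ * ∑ ls ∈ tset s (n + 1) (m - k), ∏ j, Sfin s C (p j) (ls j)

lemma rhs_eq (A : (Fin s → ℕ) → (Fin (n + 1) → ℕ) → ℂ)
    (P : Finset (Fin (n + 1) → ℕ)) (hP : ∀ k p, A k p ≠ 0 → p ∈ P)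
    (C : (Fin s → ℕ) → ℝ) (m : Fin s → ℕ) :
    (∑ᶠ k ∈ {k : Fin s → ℕ | k ≠ 0 ∧ k ≤ m},
        ∑ᶠ p : Fin (n + 1) → ℕ,
          ‖A k p‖ *
            ∑ᶠ ls ∈ {ls : Fin (n + 1) → Fin s → ℕ | (∑ j, ls j) = m - k},
              ∏ j, tupleSumR s C (p j) (ls j)) = RHSfin s n A P C m := by
  have hk : {k : Fin s → ℕ | k ≠ 0 ∧ k ≤ m} = ↑(kset m) := by
    ext k; simp [mem_kset]
  rw [hk, finsum_mem_coe_finset, RHSfin]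
  refine Finset.sum_congr rfl fun k _ => ?_
  have hin : ∀ p : Fin (n+1) → ℕ,
      (∑ᶠ ls ∈ {ls : Fin (n + 1) → Fin s → ℕ | (∑ j, ls j) = m - k},
        ∏ j, tupleSumR s C (p j) (ls j))
      = ∑ ls ∈ tset s (n + 1) (m - k), ∏ j, Sfin s C (p j) (ls j) := by
    intro p
    have hls : {ls : Fin (n + 1) → Fin s → ℕ | (∑ j, ls j) = m - k}
        = ↑(tset s (n+1) (m - k)) := by
      ext ls; simp [mem_tset]
    rw [hls, finsum_mem_coe_finset]
    exact Finset.sum_congr rfl fun ls _ => Finset.prod_congr rfl fun j _ =>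
      tupleSumR_eq C (p j) (ls j)
  have hsupp : (Function.support fun p => ‖A k p‖ *
      ∑ᶠ ls ∈ {ls : Fin (n + 1) → Fin s → ℕ | (∑ j, ls j) = m - k},
        ∏ j, tupleSumR s C (p j) (ls j)) ⊆ ↑P := by
    intro p hp
    by_contra hnp
    have : A k p = 0 := by
      by_contra hne; exact hnp (hP k p hne)
    simp [Function.mem_support, this] at hp
  rw [finsum_eq_sum_of_support_subset _ hsupp]
  exact Finset.sum_congr rfl fun p _ => by rw [hin p]

lemma Sfin_congr {C1 C2 : (Fin s → ℕ) → ℝ} {p : ℕ} {l : Fin s → ℕ}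
    (h : ∀ lam : Fin s → ℕ, lam ≠ 0 → lam ≤ l → C1 lam = C2 lam) :
    Sfin s C1 p l = Sfin s C2 p l := by
  refine Finset.sum_congr rfl fun f hf => ?_
  rw [Finset.mem_filter] at hf
  exact Finset.prod_congr rfl fun t _ =>
    h _ (hf.2 t) (le_of_sum_eq (mem_tset.1 hf.1) t)

lemma deg_lt {m k lam : Fin s → ℕ} (hk0 : k ≠ 0) (hkm : k ≤ m)
    (hlam : lam ≤ m - k) : (∑ i, lam i) < ∑ i, m i := by
  have h1 : (∑ i, lam i) ≤ ∑ i, (m i - k i) :=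
    Finset.sum_le_sum fun i _ => hlam i
  have h2 : (∑ i, (m i - k i)) < ∑ i, m i := by
    obtain ⟨i0, hi0⟩ := Function.ne_iff.1 hk0
    refine Finset.sum_lt_sum (fun i _ => Nat.sub_le _ _) ⟨i0, Finset.mem_univ i0, ?_⟩
    simp only [Pi.zero_apply] at hi0
    have hk1 : 1 ≤ k i0 := Nat.one_le_iff_ne_zero.2 hi0
    have h3 : k i0 ≤ m i0 := hkm i0
    exact Nat.sub_lt (lt_of_lt_of_le hk1 h3) hk1
  exact lt_of_le_of_lt h1 h2
  
lemma RHSfin_congr {A : (Fin s → ℕ) → (Fin (n + 1) → ℕ) → ℂ}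
    {P : Finset (Fin (n + 1) → ℕ)} {C1 C2 : (Fin s → ℕ) → ℝ} {m : Fin s → ℕ}
    (h : ∀ lam : Fin s → ℕ, lam ≠ 0 → (∑ i, lam i) < (∑ i, m i) → C1 lam = C2 lam) :
    RHSfin s n A P C1 m = RHSfin s n A P C2 m := by
  refine Finset.sum_congr rfl fun k hk => Finset.sum_congr rfl fun p _ => ?_
  rw [mem_kset] at hk
  congr 1
  refine Finset.sum_congr rfl fun ls hls => Finset.prod_congr rfl fun j _ => ?_
  refine Sfin_congr fun lam h0 hle => h lam h0 ?_
  exact deg_lt hk.1 hk.2 (hle.trans (le_of_sum_eq (mem_tset.1 hls) j))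

noncomputable def solAux (s n : ℕ) (A : (Fin s → ℕ) → (Fin (n + 1) → ℕ) → ℂ)
    (P : Finset (Fin (n + 1) → ℕ)) (ν' : ℝ) : ℕ → (Fin s → ℕ) → ℝ
  | 0 => fun _ => 0
  | d + 1 => fun m =>
      if (∑ i, m i) ≤ d then solAux s n A P ν' d m
      else (1 / ν') * RHSfin s n A P (solAux s n A P ν' d) m

noncomputable def solC (s n : ℕ) (A : (Fin s → ℕ) → (Fin (n + 1) → ℕ) → ℂ)
    (P : Finset (Fin (n + 1) → ℕ)) (ν' : ℝ) (m : Fin s → ℕ) : ℝ :=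
  solAux s n A P ν' (∑ i, m i) m

lemma sum_eq_zero_iff' {m : Fin s → ℕ} : (∑ i, m i) = 0 ↔ m = 0 := by
  constructor
  · intro h; funext i
    exact (Finset.sum_eq_zero_iff.1 h) i (Finset.mem_univ i)
  · intro h; subst h; simp

variable {A : (Fin s → ℕ) → (Fin (n + 1) → ℕ) → ℂ} {P : Finset (Fin (n + 1) → ℕ)}
  {ν' : ℝ}

lemma solAux_agree : ∀ d (m : Fin s → ℕ), (∑ i, m i) ≤ d →
    solAux s n A P ν' d m = solC s n A P ν' m := by
  intro d
  induction d with
  | zero =>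
      intro m hm
      have : m = 0 := sum_eq_zero_iff'.1 (Nat.le_zero.1 hm)
      subst this
      rw [solC]
      simp
  | succ d ih =>
      intro m hm
      by_cases h : (∑ i, m i) ≤ d
      · show (if (∑ i, m i) ≤ d then solAux s n A P ν' d m
            else (1 / ν') * RHSfin s n A P (solAux s n A P ν' d) m) = _
        rw [if_pos h, ih m h]
      · have hd : (∑ i, m i) = d + 1 := by omega
        rw [solC, hd]

lemma solC_rec (hν : ν' ≠ 0) (m : Fin s → ℕ) (hm : m ≠ 0) :
    ν' * solC s n A P ν' m = RHSfin s n A P (solC s n A P ν') m := by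
  have hd : ∃ d, (∑ i, m i) = d + 1 := by
    have := sum_eq_zero_iff' (m := m)
    rcases Nat.exists_eq_succ_of_ne_zero (fun h => hm (this.1 h)) with ⟨d, hd⟩
    exact ⟨d, hd⟩
  obtain ⟨d, hd⟩ := hd
  have h1 : solC s n A P ν' m = (1 / ν') * RHSfin s n A P (solAux s n A P ν' d) m := by
    rw [solC, hd]
    show (if (∑ i, m i) ≤ d then solAux s n A P ν' d m
        else (1 / ν') * RHSfin s n A P (solAux s n A P ν' d) m) = _
    rw [if_neg (by omega)]
  have h2 : RHSfin s n A P (solAux s n A P ν' d) m = RHSfin s n A P (solC s n A P ν') m :=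
    RHSfin_congr fun lam _ hlt => solAux_agree d lam (by omega)
  rw [h1, h2]
  field_simp

lemma Sfin_nonneg {C : (Fin s → ℕ) → ℝ} {p : ℕ} {l : Fin s → ℕ}
    (h : ∀ lam : Fin s → ℕ, lam ≠ 0 → lam ≤ l → 0 ≤ C lam) :
    0 ≤ Sfin s C p l := by
  refine Finset.sum_nonneg fun f hf => ?_
  rw [Finset.mem_filter] at hf
  exact Finset.prod_nonneg fun t _ => h _ (hf.2 t) (le_of_sum_eq (mem_tset.1 hf.1) t)

lemma RHSfin_nonneg {C : (Fin s → ℕ) → ℝ} {m : Fin s → ℕ}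
    (h : ∀ lam : Fin s → ℕ, lam ≠ 0 → (∑ i, lam i) < (∑ i, m i) → 0 ≤ C lam) :
    0 ≤ RHSfin s n A P C m := by
  refine Finset.sum_nonneg fun k hk => Finset.sum_nonneg fun p _ => ?_
  rw [mem_kset] at hk
  refine mul_nonneg (norm_nonneg _) ?_
  refine Finset.sum_nonneg fun ls hls => Finset.prod_nonneg fun j _ => ?_
  refine Sfin_nonneg fun lam h0 hle => h lam h0 ?_
  exact deg_lt hk.1 hk.2 (hle.trans (le_of_sum_eq (mem_tset.1 hls) j))

lemma solC_nonneg (hν : 0 < ν') (m : Fin s → ℕ) (hm : m ≠ 0) :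
    0 ≤ solC s n A P ν' m := by
  have key : ∀ d (m : Fin s → ℕ), (∑ i, m i) = d → m ≠ 0 → 0 ≤ solC s n A P ν' m := by
    intro d
    induction d using Nat.strong_induction_on with
    | _ d ih =>
      intro m hd hm
      rw [show solC s n A P ν' m = (1/ν') * (ν' * solC s n A P ν' m) by field_simp,
        solC_rec (ne_of_gt hν) m hm]
      refine mul_nonneg (by positivity) (RHSfin_nonneg fun lam h0 hlt => ?_)
      exact ih _ (hd ▸ hlt) lam rfl h0
  exact key _ m rfl hm

lemma solC_unique (hν : 0 < ν')
    (hP : ∀ k p, A k p ≠ 0 → p ∈ P)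
    (C' : (Fin s → ℕ) → ℝ) (hC' : MajorantRec s n ν' A C')
    (m : Fin s → ℕ) (hm : m ≠ 0) : C' m = solC s n A P ν' m := by
  have key : ∀ d (m : Fin s → ℕ), (∑ i, m i) = d → m ≠ 0 →
      C' m = solC s n A P ν' m := by
    intro d
    induction d using Nat.strong_induction_on with
    | _ d ih =>
      intro m hd hm
      have h1 : ν' * C' m = RHSfin s n A P C' m := by
        rw [hC' m hm, rhs_eq A P hP]
      have h2 : RHSfin s n A P C' m = RHSfin s n A P (solC s n A P ν') m :=
        RHSfin_congr fun lam h0 hlt => ih _ (hd ▸ hlt) lam rfl h0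
      have h3 := solC_rec (n := n) (A := A) (P := P) (ne_of_gt hν) m hm
      have := h1.trans (h2.trans h3.symm)
      exact mul_left_cancel₀ (ne_of_gt hν) this
  exact key _ m rfl hm

/-! ### weights and convolution bounds -/

noncomputable def g (a : ℕ) : ℝ := 1 / ((a : ℝ) + 1) ^ 2

lemma g_pos (a : ℕ) : 0 < g a := by unfold g; positivity

lemma g_le_one (a : ℕ) : g a ≤ 1 := by
  unfold g
  rw [div_le_one (by positivity)]
  nlinarith [Nat.cast_nonneg (α := ℝ) a]

lemma g_zero : g 0 = 1 := by simp [g]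

noncomputable def wgt (s : ℕ) (m : Fin s → ℕ) : ℝ := ∏ i, g (m i)

lemma wgt_pos (m : Fin s → ℕ) : 0 < wgt s m :=
  Finset.prod_pos fun i _ => g_pos _

lemma wgt_le_one (m : Fin s → ℕ) : wgt s m ≤ 1 :=
  Finset.prod_le_one (fun i _ => (g_pos _).le) (fun i _ => g_le_one _)

lemma wgt_zero : wgt s 0 = 1 := by simp [wgt, g_zero]

lemma gsum_aux : ∀ N : ℕ, ∑ a ∈ Finset.range (N + 1), g a ≤ 2 - 1 / ((N : ℝ) + 1) := by
  intro N
  induction N with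
  | zero => simp [g_zero]; norm_num
  | succ N ih =>
      rw [Finset.sum_range_succ]
      have h1 : g (N + 1) ≤ 1 / ((N : ℝ) + 1) - 1 / ((N : ℝ) + 1 + 1) := by
        unfold g
        have hN : (0 : ℝ) ≤ (N : ℝ) := Nat.cast_nonneg _
        rw [div_sub_div _ _ (by positivity) (by positivity)]
        rw [div_le_div_iff₀ (by push_cast; positivity) (by positivity)]
        push_cast
        nlinarith
      have : ((N : ℕ) + 1 : ℕ) = ((N : ℝ) + 1 : ℝ) := by push_cast; ring
      push_cast
      push_cast at ih h1
      linarith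
  
lemma gsum_le (N : ℕ) : ∑ a ∈ Finset.range N, g a ≤ 2 := by
  cases N with
  | zero => simp
  | succ N =>
      have := gsum_aux N
      have h2 : (0:ℝ) < 1 / ((N:ℝ)+1) := by positivity
      linarith

lemma g_le_four {b L : ℕ} (h : L ≤ 2 * b) : g b ≤ 4 * g L := by
  unfold g
  have h4 : 4 * (1 / ((L : ℝ) + 1) ^ 2) = 4 / ((L : ℝ) + 1) ^ 2 := by ring
  rw [h4, div_le_div_iff₀ (by positivity) (by positivity)]
  have hc : (L : ℝ) ≤ 2 * b := by exact_mod_cast h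
  nlinarith [Nat.cast_nonneg (α := ℝ) b, Nat.cast_nonneg (α := ℝ) L]

lemma g_mul_le {a b : ℕ} : g a * g b ≤ 4 * g (a + b) * (g a + g b) := by
  rcases le_total a b with h | h
  · have hb : g b ≤ 4 * g (a + b) := g_le_four (by omega)
    calc g a * g b = g b * g a := by ring
      _ ≤ (4 * g (a + b)) * g a :=
          mul_le_mul_of_nonneg_right hb (g_pos a).le
      _ ≤ 4 * g (a + b) * (g a + g b) := by
          have := (g_pos b).le
          have := (g_pos (a+b)).le
          nlinarith
  · have ha : g a ≤ 4 * g (a + b) := g_le_four (by omega)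
    calc g a * g b ≤ (4 * g (a + b)) * g b :=
          mul_le_mul_of_nonneg_right ha (g_pos b).le
      _ ≤ 4 * g (a + b) * (g a + g b) := by
          have := (g_pos a).le
          have := (g_pos (a+b)).le
          nlinarith

lemma g_conv (L : ℕ) : ∑ a ∈ Finset.range (L + 1), g a * g (L - a) ≤ 16 * g L := by
  have step : ∀ a ∈ Finset.range (L + 1),
      g a * g (L - a) ≤ 4 * g L * (g a + g (L - a)) := by
    intro a ha
    rw [Finset.mem_range] at ha
    have hab : a + (L - a) = L := by omega
    calc g a * g (L - a) ≤ 4 * g (a + (L - a)) * (g a + g (L - a)) := g_mul_le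
      _ = 4 * g L * (g a + g (L - a)) := by rw [hab]
  calc ∑ a ∈ Finset.range (L + 1), g a * g (L - a)
      ≤ ∑ a ∈ Finset.range (L + 1), 4 * g L * (g a + g (L - a)) :=
        Finset.sum_le_sum step
    _ = 4 * g L * ((∑ a ∈ Finset.range (L + 1), g a)
          + ∑ a ∈ Finset.range (L + 1), g (L - a)) := by
        rw [← Finset.sum_add_distrib, Finset.mul_sum]
    _ = 4 * g L * ((∑ a ∈ Finset.range (L + 1), g a)
          + ∑ a ∈ Finset.range (L + 1), g a) := by
        have hrefl : ∑ a ∈ Finset.range (L + 1), g (L - a)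
            = ∑ a ∈ Finset.range (L + 1), g a := by
          rw [← Finset.sum_range_reflect (fun a => g a) (L + 1)]
          refine Finset.sum_congr rfl fun a ha => ?_
          rw [Finset.mem_range] at ha
          exact congrArg g (by omega)
        rw [hrefl]
    _ ≤ 4 * g L * (2 + 2) := by
        have h1 := gsum_le (L + 1)
        have h2 := (g_pos L).le
        nlinarith [Finset.sum_nonneg (fun a (_ : a ∈ Finset.range (L+1)) => (g_pos a).le)]
    _ = 16 * g L := by ring

lemma Iic_nat (L : ℕ) : Finset.Iic L = Finset.range (L + 1) := by
  ext x; simp [Nat.lt_succ_iff]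

lemma wgt_conv (l : Fin s → ℕ) :
    ∑ a ∈ box l, wgt s a * wgt s (l - a) ≤ (16 : ℝ) ^ s * wgt s l := by
  have key : ∑ a ∈ box l, wgt s a * wgt s (l - a)
      = ∏ i, ∑ x ∈ Finset.Iic (l i), g x * g (l i - x) := by
    rw [Finset.prod_univ_sum]
    refine Finset.sum_congr rfl fun a _ => ?_
    rw [wgt, wgt, ← Finset.prod_mul_distrib]
    rfl
  rw [key]
  have hle : ∀ i : Fin s, ∑ x ∈ Finset.Iic (l i), g x * g (l i - x) ≤ 16 * g (l i) := by
    intro i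
    rw [Iic_nat]
    exact g_conv (l i)
  calc ∏ i, ∑ x ∈ Finset.Iic (l i), g x * g (l i - x)
      ≤ ∏ i : Fin s, 16 * g (l i) := by
        refine Finset.prod_le_prod (fun i _ => ?_) (fun i _ => hle i)
        exact Finset.sum_nonneg fun x _ => mul_nonneg (g_pos _).le (g_pos _).le
    _ = (16 : ℝ) ^ s * wgt s l := by
        rw [Finset.prod_mul_distrib, wgt, Finset.prod_const, Finset.card_univ,
          Fintype.card_fin]

noncomputable def Usum (s p : ℕ) (l : Fin s → ℕ) : ℝ :=
  ∑ f ∈ tset s p l, ∏ t, wgt s (f t)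

lemma Usum_zero (l : Fin s → ℕ) : Usum s 0 l = if l = 0 then 1 else 0 := by
  by_cases hl : l = 0
  · subst hl
    rw [if_pos rfl, Usum]
    have h1 : tset s 0 (0 : Fin s → ℕ) = {![]} := by
      ext f
      rw [mem_tset]
      simp only [Finset.mem_singleton]
      constructor
      · intro _; exact funext fun t => t.elim0
      · intro h; subst h; simp
    rw [h1, Finset.sum_singleton]
    simp
  · rw [if_neg hl, Usum]
    have h1 : tset s 0 l = ∅ := by
      ext f
      rw [mem_tset]
      simp only [Finset.notMem_empty, iff_false]
      intro h
      exact hl (by rw [← h]; simp)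
    rw [h1, Finset.sum_empty]

lemma Usum_succ (p : ℕ) (l : Fin s → ℕ) :
    Usum s (p + 1) l = ∑ a ∈ box l, wgt s a * Usum s p (l - a) := by
  rw [Usum]
  have hrhs : ∑ a ∈ box l, wgt s a * Usum s p (l - a)
      = ∑ x ∈ (box l).sigma (fun a => tset s p (l - a)),
          wgt s x.1 * ∏ t, wgt s (x.2 t) := by
    rw [Finset.sum_sigma]
    refine Finset.sum_congr rfl fun a _ => ?_
    rw [Usum, Finset.mul_sum]
  rw [hrhs]
  refine (Finset.sum_nbij' (fun x => Fin.cons x.1 x.2)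
    (fun f => ⟨f 0, Fin.tail f⟩) ?_ ?_ ?_ ?_ ?_).symm
  · -- forward membership
    rintro ⟨a, f'⟩ hx
    rw [Finset.mem_sigma] at hx
    obtain ⟨ha, hf'⟩ := hx
    rw [mem_box] at ha
    rw [mem_tset] at hf' ⊢
    rw [Fin.sum_cons, hf']
    funext i
    have h5 : a i ≤ l i := ha i
    simp only [Pi.add_apply, Pi.sub_apply]
    omega
  · -- backward membership
    intro f hf
    rw [mem_tset] at hf
    rw [Finset.mem_sigma, mem_box, mem_tset]
    constructor
    · exact le_of_sum_eq hf 0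
    · have hsum : f 0 + ∑ t, Fin.tail f t = l := by
        rw [← hf, Fin.sum_univ_succ]; rfl
      funext i
      have := congrFun hsum i
      simp only [Pi.add_apply, Finset.sum_apply] at this ⊢
      simp only [Pi.sub_apply]
      omega
  · rintro ⟨a, f'⟩ _
    simp [Fin.tail_cons]
  · intro f _
    exact Fin.cons_self_tail f
  · rintro ⟨a, f'⟩ _
    rw [Fin.prod_univ_succ]
    simp only [Fin.cons_zero, Fin.cons_succ]

lemma Usum_nonneg (p : ℕ) (l : Fin s → ℕ) : 0 ≤ Usum s p l :=
  Finset.sum_nonneg fun f _ => Finset.prod_nonneg fun t _ => (wgt_pos _).le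

lemma Usum_le (p : ℕ) (l : Fin s → ℕ) :
    Usum s p l ≤ ((16 : ℝ) ^ s) ^ p * wgt s l := by
  induction p generalizing l with
  | zero =>
      rw [Usum_zero, pow_zero, one_mul]
      by_cases hl : l = 0
      · subst hl; rw [if_pos rfl, wgt_zero]
      · rw [if_neg hl]; exact (wgt_pos _).le
  | succ p ih =>
      rw [Usum_succ]
      have h16 : (0:ℝ) ≤ (16:ℝ)^s := by positivity
      calc ∑ a ∈ box l, wgt s a * Usum s p (l - a)
          ≤ ∑ a ∈ box l, wgt s a * (((16:ℝ)^s)^p * wgt s (l - a)) := by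
            refine Finset.sum_le_sum fun a _ => ?_
            exact mul_le_mul_of_nonneg_left (ih (l - a)) (wgt_pos a).le
        _ = ((16:ℝ)^s)^p * ∑ a ∈ box l, wgt s a * wgt s (l - a) := by
            rw [Finset.mul_sum]; refine Finset.sum_congr rfl fun a _ => by ring
        _ ≤ ((16:ℝ)^s)^p * ((16:ℝ)^s * wgt s l) := by
            refine mul_le_mul_of_nonneg_left (wgt_conv l) (by positivity)
        _ = ((16:ℝ)^s)^(p+1) * wgt s l := by ring

lemma sum_deg_of_sum_eq {p : ℕ} {l : Fin s → ℕ} {f : Fin p → Fin s → ℕ}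
    (h : (∑ t, f t) = l) : (∑ t, ∑ i, f t i) = ∑ i, l i := by
  rw [← h]
  rw [Finset.sum_comm]
  refine Finset.sum_congr rfl fun i _ => ?_
  rw [Finset.sum_apply]

lemma Sfin_le {C : (Fin s → ℕ) → ℝ} {R : ℝ} (hR : 1 ≤ R) {p : ℕ} {l : Fin s → ℕ}
    (hC : ∀ lam : Fin s → ℕ, lam ≠ 0 → lam ≤ l → C lam ≤ R ^ (∑ i, lam i) * wgt s lam)
    (hC0 : ∀ lam : Fin s → ℕ, lam ≠ 0 → lam ≤ l → 0 ≤ C lam) :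
    Sfin s C p l ≤ R ^ (∑ i, l i) * ((16 : ℝ) ^ s) ^ p * wgt s l := by
  have hR0 : (0:ℝ) ≤ R := le_trans zero_le_one hR
  calc Sfin s C p l
      ≤ ∑ f ∈ (tset s p l).filter (fun f => ∀ t, f t ≠ 0),
          ∏ t, (R ^ (∑ i, f t i) * wgt s (f t)) := by
        refine Finset.sum_le_sum fun f hf => ?_
        rw [Finset.mem_filter] at hf
        refine Finset.prod_le_prod (fun t _ => ?_) (fun t _ => ?_)
        · exact hC0 _ (hf.2 t) (le_of_sum_eq (mem_tset.1 hf.1) t)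
        · exact hC _ (hf.2 t) (le_of_sum_eq (mem_tset.1 hf.1) t)
    _ = ∑ f ∈ (tset s p l).filter (fun f => ∀ t, f t ≠ 0),
          R ^ (∑ i, l i) * ∏ t, wgt s (f t) := by
        refine Finset.sum_congr rfl fun f hf => ?_
        rw [Finset.mem_filter] at hf
        rw [Finset.prod_mul_distrib, Finset.prod_pow_eq_pow_sum]
        rw [sum_deg_of_sum_eq (mem_tset.1 hf.1)]
    _ = R ^ (∑ i, l i) * ∑ f ∈ (tset s p l).filter (fun f => ∀ t, f t ≠ 0),
          ∏ t, wgt s (f t) := by rw [Finset.mul_sum]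
    _ ≤ R ^ (∑ i, l i) * Usum s p l := by
        refine mul_le_mul_of_nonneg_left ?_ (by positivity)
        rw [Usum]
        refine Finset.sum_le_sum_of_subset_of_nonneg (Finset.filter_subset _ _)
          fun f _ _ => Finset.prod_nonneg fun t _ => (wgt_pos _).le
    _ ≤ R ^ (∑ i, l i) * (((16:ℝ)^s)^p * wgt s l) := by
        exact mul_le_mul_of_nonneg_left (Usum_le p l) (by positivity)
    _ = R ^ (∑ i, l i) * ((16 : ℝ) ^ s) ^ p * wgt s l := by ring

lemma wgt_sub_le {m k : Fin s → ℕ} (hkm : k ≤ m) :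
    wgt s (m - k) ≤ (∏ i, ((k i : ℝ) + 1) ^ 2) * wgt s m := by
  rw [wgt, wgt, ← Finset.prod_mul_distrib]
  refine Finset.prod_le_prod (fun i _ => (g_pos _).le) (fun i _ => ?_)
  show g ((m - k) i) ≤ ((k i : ℝ) + 1) ^ 2 * g (m i)
  have hki : k i ≤ m i := hkm i
  have hnat : (m i : ℝ) + 1 ≤ ((k i : ℝ) + 1) * (((m i - k i : ℕ) : ℝ) + 1) := by
    have : (m i + 1) ≤ (k i + 1) * ((m i - k i) + 1) := by
      have h := Nat.sub_add_cancel hki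
      nlinarith [Nat.sub_add_cancel hki]
    exact_mod_cast this
  show (1 : ℝ) / (((m i - k i : ℕ) : ℝ) + 1) ^ 2 ≤ ((k i : ℝ) + 1) ^ 2 * (1 / ((m i : ℝ) + 1) ^ 2)
  have h1 : (0:ℝ) < ((m i - k i : ℕ) : ℝ) + 1 := by positivity
  have h2 : (0:ℝ) < (m i : ℝ) + 1 := by positivity
  have h3 : (0:ℝ) ≤ (k i : ℝ) + 1 := by positivity
  rw [div_le_iff₀ (by positivity)]
  have key : ((m i : ℝ) + 1)^2 ≤ (((k i : ℝ) + 1) * (((m i - k i : ℕ) : ℝ) + 1))^2 := by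
    refine pow_le_pow_left₀ (by positivity) hnat 2
  rw [mul_pow] at key
  rw [div_eq_mul_inv, one_mul]
  rw [mul_assoc, mul_comm, mul_assoc]
  rw [← div_le_iff₀ (by positivity)]
  rw [div_eq_mul_inv, one_mul]
  rw [inv_le_inv₀ (by positivity) (by positivity)]
  nlinarith [key]

lemma solC_bound (hν : 0 < ν')
    (F : Finset ((Fin s → ℕ) × (Fin (n + 1) → ℕ)))
    (hF : ∀ k p, A k p ≠ 0 → (k, p) ∈ F) :
    ∃ R > (0 : ℝ), ∀ m : Fin s → ℕ, m ≠ 0 →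
      solC s n A P ν' m ≤ R ^ (∑ i, m i) * wgt s m := by
  set B : ℝ := (16 : ℝ) ^ s with hB
  have hB1 : (1 : ℝ) ≤ B := one_le_pow₀ (by norm_num)
  have hB0 : (0 : ℝ) ≤ B := le_trans zero_le_one hB1
  set E : ℝ := ∑ x ∈ F, ‖A x.1 x.2‖ *
      (B ^ ((∑ j, x.2 j) + (n + 1)) * ∏ i, ((x.1 i : ℝ) + 1) ^ 2) with hE
  have hE0 : 0 ≤ E := Finset.sum_nonneg fun x _ => by positivity
  set R : ℝ := max 1 (E / ν') with hR
  have hR1 : (1 : ℝ) ≤ R := le_max_left _ _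
  have hR0 : (0 : ℝ) < R := lt_of_lt_of_le one_pos hR1
  have hER : E ≤ ν' * R := by
    have h1 : E / ν' ≤ R := le_max_right _ _
    calc E = ν' * (E / ν') := by field_simp
      _ ≤ ν' * R := mul_le_mul_of_nonneg_left h1 hν.le
  refine ⟨R, hR0, ?_⟩
  have key : ∀ d (m : Fin s → ℕ), (∑ i, m i) = d → m ≠ 0 →
      solC s n A P ν' m ≤ R ^ (∑ i, m i) * wgt s m := by
    intro d
    induction d using Nat.strong_induction_on with
    | _ d ih =>
      intro m hd hm
      have hdm : 1 ≤ ∑ i, m i :=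
        Nat.one_le_iff_ne_zero.2 fun h => hm (sum_eq_zero_iff'.1 h)
      have hrec := solC_rec (n := n) (A := A) (P := P) (ne_of_gt hν) m hm
      set D : ℕ := ∑ i, m i with hD
      set T : ℝ := R ^ (D - 1) * wgt s m with hT
      have hT0 : 0 ≤ T := mul_nonneg (by positivity) (wgt_pos m).le
      -- bound each (k,p) term of RHSfin
      have hterm : ∀ k ∈ kset m, ∀ p ∈ P,
          ‖A k p‖ *
              ∑ ls ∈ tset s (n + 1) (m - k), ∏ j, Sfin s (solC s n A P ν') (p j) (ls j)
            ≤ ‖A k p‖ *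
              (B ^ ((∑ j, p j) + (n + 1)) * ∏ i, ((k i : ℝ) + 1) ^ 2) * T := by
        intro k hk p hp
        rw [mem_kset] at hk
        have hdegmk : (∑ i, (m - k) i) < D := deg_lt hk.1 hk.2 (le_refl _)
        have hls : ∀ ls ∈ tset s (n + 1) (m - k),
            (∏ j, Sfin s (solC s n A P ν') (p j) (ls j))
              ≤ R ^ (∑ i, (m - k) i) * B ^ (∑ j, p j) * ∏ j, wgt s (ls j) := by
          intro ls hls
          have hstep : ∀ j : Fin (n + 1),
              Sfin s (solC s n A P ν') (p j) (ls j)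
                ≤ R ^ (∑ i, ls j i) * B ^ (p j) * wgt s (ls j) := by
            intro j
            have hlsj : ls j ≤ m - k := le_of_sum_eq (mem_tset.1 hls) j
            refine Sfin_le hR1 (fun lam h0 hle => ?_) (fun lam h0 hle => ?_)
            · have hlt : (∑ i, lam i) < D := deg_lt hk.1 hk.2 (hle.trans hlsj)
              exact ih _ (hd ▸ hlt) lam rfl h0
            · exact solC_nonneg hν lam h0
          calc (∏ j, Sfin s (solC s n A P ν') (p j) (ls j))
              ≤ ∏ j, (R ^ (∑ i, ls j i) * B ^ (p j) * wgt s (ls j)) := by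
                refine Finset.prod_le_prod (fun j _ => ?_) (fun j _ => hstep j)
                refine Sfin_nonneg fun lam h0 _ => solC_nonneg hν lam h0
            _ = R ^ (∑ i, (m - k) i) * B ^ (∑ j, p j) * ∏ j, wgt s (ls j) := by
                rw [Finset.prod_mul_distrib, Finset.prod_mul_distrib,
                  Finset.prod_pow_eq_pow_sum, Finset.prod_pow_eq_pow_sum,
                  sum_deg_of_sum_eq (mem_tset.1 hls)]
        have hsum_ls : (∑ ls ∈ tset s (n + 1) (m - k),
              ∏ j, Sfin s (solC s n A P ν') (p j) (ls j))
            ≤ R ^ (∑ i, (m - k) i) * B ^ (∑ j, p j) * Usum s (n + 1) (m - k) := by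
          rw [Usum, Finset.mul_sum]
          exact Finset.sum_le_sum hls
        have hU : Usum s (n + 1) (m - k) ≤ B ^ (n + 1) * wgt s (m - k) := Usum_le _ _
        have hw : wgt s (m - k) ≤ (∏ i, ((k i : ℝ) + 1) ^ 2) * wgt s m :=
          wgt_sub_le hk.2
        have hRpow : R ^ (∑ i, (m - k) i) ≤ R ^ (D - 1) :=
          pow_le_pow_right₀ hR1 (by omega)
        have hq0 : (0:ℝ) ≤ ∏ i, ((k i : ℝ) + 1) ^ 2 := by positivity
        have chain : (∑ ls ∈ tset s (n + 1) (m - k),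
              ∏ j, Sfin s (solC s n A P ν') (p j) (ls j))
            ≤ B ^ ((∑ j, p j) + (n + 1)) * (∏ i, ((k i : ℝ) + 1) ^ 2) * T := by
          calc (∑ ls ∈ tset s (n + 1) (m - k),
                ∏ j, Sfin s (solC s n A P ν') (p j) (ls j))
              ≤ R ^ (∑ i, (m - k) i) * B ^ (∑ j, p j) * Usum s (n + 1) (m - k) := hsum_ls
            _ ≤ R ^ (∑ i, (m - k) i) * B ^ (∑ j, p j) * (B ^ (n + 1) * wgt s (m - k)) := by
                refine mul_le_mul_of_nonneg_left hU (by positivity)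
            _ ≤ R ^ (∑ i, (m - k) i) * B ^ (∑ j, p j) *
                  (B ^ (n + 1) * ((∏ i, ((k i : ℝ) + 1) ^ 2) * wgt s m)) := by
                refine mul_le_mul_of_nonneg_left ?_ (by positivity)
                exact mul_le_mul_of_nonneg_left hw (by positivity)
            _ ≤ R ^ (D - 1) * B ^ (∑ j, p j) *
                  (B ^ (n + 1) * ((∏ i, ((k i : ℝ) + 1) ^ 2) * wgt s m)) := by
                refine mul_le_mul_of_nonneg_right
                  (mul_le_mul_of_nonneg_right hRpow (by positivity)) ?_
                have := (wgt_pos (s := s) m).le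
                positivity
            _ = B ^ ((∑ j, p j) + (n + 1)) * (∏ i, ((k i : ℝ) + 1) ^ 2) * T := by
                rw [pow_add, hT]; ring
        calc ‖A k p‖ *
              ∑ ls ∈ tset s (n + 1) (m - k), ∏ j, Sfin s (solC s n A P ν') (p j) (ls j)
            ≤ ‖A k p‖ *
              (B ^ ((∑ j, p j) + (n + 1)) * (∏ i, ((k i : ℝ) + 1) ^ 2) * T) :=
              mul_le_mul_of_nonneg_left chain (norm_nonneg _)
          _ = ‖A k p‖ *
              (B ^ ((∑ j, p j) + (n + 1)) * ∏ i, ((k i : ℝ) + 1) ^ 2) * T := by ring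
      -- sum the per-term bounds
      have hsum2 : RHSfin s n A P (solC s n A P ν') m
          ≤ (∑ k ∈ kset m, ∑ p ∈ P, ‖A k p‖ *
              (B ^ ((∑ j, p j) + (n + 1)) * ∏ i, ((k i : ℝ) + 1) ^ 2)) * T := by
        rw [Finset.sum_mul]
        refine Finset.sum_le_sum fun k hk => ?_
        rw [Finset.sum_mul]
        exact Finset.sum_le_sum fun p hp => hterm k hk p hp
      have hEsum : (∑ k ∈ kset m, ∑ p ∈ P, ‖A k p‖ *
            (B ^ ((∑ j, p j) + (n + 1)) * ∏ i, ((k i : ℝ) + 1) ^ 2)) ≤ E := by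
        rw [← Finset.sum_product']
        have hfilter : (∑ x ∈ (kset m ×ˢ P).filter (fun x => x ∈ F),
              ‖A x.1 x.2‖ *
                (B ^ ((∑ j, x.2 j) + (n + 1)) * ∏ i, ((x.1 i : ℝ) + 1) ^ 2))
            = ∑ x ∈ kset m ×ˢ P, ‖A x.1 x.2‖ *
                (B ^ ((∑ j, x.2 j) + (n + 1)) * ∏ i, ((x.1 i : ℝ) + 1) ^ 2) := by
          refine Finset.sum_filter_of_ne fun x _ hne => ?_
          by_contra hxF
          have hA0 : A x.1 x.2 = 0 := by
            by_contra h0; exact hxF (hF x.1 x.2 h0)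
          simp [hA0] at hne
        rw [← hfilter, hE]
        refine Finset.sum_le_sum_of_subset_of_nonneg
          (fun x hx => (Finset.mem_filter.1 hx).2) (fun x _ _ => by positivity)
      have hfinal : ν' * solC s n A P ν' m ≤ ν' * (R ^ D * wgt s m) := by
        calc ν' * solC s n A P ν' m = RHSfin s n A P (solC s n A P ν') m := hrec
          _ ≤ (∑ k ∈ kset m, ∑ p ∈ P, ‖A k p‖ *
                (B ^ ((∑ j, p j) + (n + 1)) * ∏ i, ((k i : ℝ) + 1) ^ 2)) * T := hsum2
          _ ≤ E * T := mul_le_mul_of_nonneg_right hEsum hT0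
          _ ≤ (ν' * R) * T := mul_le_mul_of_nonneg_right hER hT0
          _ = ν' * (R * R ^ (D - 1) * wgt s m) := by rw [hT]; ring
          _ = ν' * (R ^ D * wgt s m) := by
              congr 2
              rw [← pow_succ']
              congr 1
              omega
      exact le_of_mul_le_mul_left hfinal hν
  exact fun m hm => key _ m rfl hm

end Stmt12Aux


/-- existence, nonnegativity, uniqueness and exponential bound for
the solution of the majorant recursion (the paper's application of the implicit
function theorem to the majorant equation). -/
theorem stmt12 (s : ℕ) (hs : 1 ≤ s) (n : ℕ)
    (A : (Fin s → ℕ) → (Fin (n + 1) → ℕ) → ℂ)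
    (hA : {kp : (Fin s → ℕ) × (Fin (n + 1) → ℕ) | A kp.1 kp.2 ≠ 0}.Finite)
    (ν' : ℝ) (hν'0 : 0 < ν') (hν'1 : ν' ≤ 1) :
    ∃ C : (Fin s → ℕ) → ℝ,
      MajorantRec s n ν' A C ∧
      (∀ m : Fin s → ℕ, m ≠ 0 → 0 ≤ C m) ∧
      (∃ R > (0 : ℝ), ∀ m : Fin s → ℕ, m ≠ 0 → C m ≤ R ^ (∑ i, m i)) ∧
      (∀ C' : (Fin s → ℕ) → ℝ, MajorantRec s n ν' A C' →
        ∀ m : Fin s → ℕ, m ≠ 0 → C' m = C m) := by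
  classical
  set P : Finset (Fin (n + 1) → ℕ) := hA.toFinset.image Prod.snd with hPdef
  have hP : ∀ k p, A k p ≠ 0 → p ∈ P := fun k p h =>
    Finset.mem_image.2 ⟨(k, p), hA.mem_toFinset.2 h, rfl⟩
  have hF : ∀ k p, A k p ≠ 0 → (k, p) ∈ hA.toFinset := fun k p h =>
    hA.mem_toFinset.2 h
  refine ⟨Stmt12Aux.solC s n A P ν', ?_, ?_, ?_, ?_⟩
  · intro m hm
    rw [Stmt12Aux.rhs_eq A P hP]
    exact Stmt12Aux.solC_rec (ne_of_gt hν'0) m hm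
  · exact fun m hm => Stmt12Aux.solC_nonneg hν'0 m hm
  · obtain ⟨R, hR0, hRb⟩ := Stmt12Aux.solC_bound (A := A) (P := P) hν'0 hA.toFinset hF
    refine ⟨R, hR0, fun m hm => ?_⟩
    calc Stmt12Aux.solC s n A P ν' m ≤ R ^ (∑ i, m i) * Stmt12Aux.wgt s m := hRb m hm
      _ ≤ R ^ (∑ i, m i) * 1 :=
          mul_le_mul_of_nonneg_left (Stmt12Aux.wgt_le_one m) (by positivity)
      _ = R ^ (∑ i, m i) := mul_one _
  · exact fun C' hC' m hm => Stmt12Aux.solC_unique hν'0 hP C' hC' m hm
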